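/- arXiv:0807.2160 — 3 statements merged into one kernel-verified Lean document; each statement's English description precedes it below -/
import Mathlib

section
/- For every positive integer N, set ε = a/N, and let Y : ℝ → ℝ be defined by Y(ξ) = −ξ + ⌊ξ⌋ + 1/2. Then for every continuously differentiable function v : ℝ² → ℝ the following integral identity holds: (εh/2) · Σ_{j=0}^{N−1} ∫_{−l}^{0} [ v(ε(j+(1−h)/2), x₂) + v(ε(j+(1+h)/2), x₂) ] dx₂ = ∫_{G_ε} v(x) dx − ε ∫_{G_ε} Y(x₁/ε) · (∂v/∂x₁)(x) dx. -/
open MeasureTheory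

/-- The special integral identity (Lemma 1 of Mel'nyk's method): for the thick-junction rods
`G_ε`, the boundary integral over the vertical sides of the rods equals a volume integral
minus `ε` times a weighted integral of the `x₁`-derivative. -/
theorem signorini_integral_identity
    (a l h : ℝ) (ha : 0 < a) (hl : 0 < l) (hh : h ∈ Set.Ioo (0 : ℝ) 1)
    (N : ℕ) (hN : 0 < N) (ε : ℝ) (hε : ε = a / N)
    (Y : ℝ → ℝ) (hY : ∀ ξ : ℝ, Y ξ = -ξ + ⌊ξ⌋ + 1 / 2)
    (Gε : Set (ℝ × ℝ))
    (hG : Gε = ⋃ j ∈ Finset.range N,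
      {x : ℝ × ℝ | |x.1 / ε - ((j : ℝ) + 1 / 2)| < h / 2 ∧ x.2 ∈ Set.Ioo (-l) 0})
    (v : ℝ × ℝ → ℝ) (hv : ContDiff ℝ 1 v) :
    ε * h / 2 *
        ∑ j ∈ Finset.range N,
          ∫ x₂ in (-l)..0,
            (v (ε * ((j : ℝ) + (1 - h) / 2), x₂) + v (ε * ((j : ℝ) + (1 + h) / 2), x₂)) =
      (∫ x in Gε, v x) - ε * ∫ x in Gε, Y (x.1 / ε) * fderiv ℝ v x (1, 0) := by
  obtain ⟨hh0, hh1⟩ := hh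
  have hεpos : 0 < ε := by
    rw [hε]; positivity
  have hεne : ε ≠ 0 := hεpos.ne'
  set D : ℝ × ℝ → ℝ := fun x => fderiv ℝ v x (1, 0) with hD
  have hDcont : Continuous D := (hv.continuous_fderiv one_ne_zero).clm_apply continuous_const
  have hvcont : Continuous v := hv.continuous
  -- the rods as products of intervals
  set α : ℕ → ℝ := fun j => ε * ((j : ℝ) + (1 - h) / 2) with hα
  set β : ℕ → ℝ := fun j => ε * ((j : ℝ) + (1 + h) / 2) with hβ
  set S : ℕ → Set (ℝ × ℝ) := fun j => Set.Ioo (α j) (β j) ×ˢ Set.Ioo (-l) 0 with hS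
  have hαβ : ∀ j : ℕ, α j < β j := by
    intro j; simp only [hα, hβ]
    have : (j : ℝ) + (1 - h) / 2 < (j : ℝ) + (1 + h) / 2 := by linarith
    exact mul_lt_mul_of_pos_left this hεpos
  have hset : ∀ j : ℕ,
      {x : ℝ × ℝ | |x.1 / ε - ((j : ℝ) + 1 / 2)| < h / 2 ∧ x.2 ∈ Set.Ioo (-l) 0} = S j := by
    intro j
    ext x
    have hx : x.1 / ε * ε = x.1 := div_mul_cancel₀ x.1 hεne
    simp only [Set.mem_setOf_eq, hS, Set.mem_prod, Set.mem_Ioo, abs_sub_lt_iff, hα, hβ]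
    constructor
    · rintro ⟨⟨h1, h2⟩, h3⟩
      refine ⟨⟨?_, ?_⟩, h3⟩
      · nlinarith [mul_lt_mul_of_pos_right h2 hεpos]
      · nlinarith [mul_lt_mul_of_pos_right h1 hεpos]
    · rintro ⟨⟨h1, h2⟩, h3⟩
      have h1' : (j : ℝ) + (1 - h) / 2 < x.1 / ε := by
        rw [lt_div_iff₀ hεpos]; nlinarith
      have h2' : x.1 / ε < (j : ℝ) + (1 + h) / 2 := by
        rw [div_lt_iff₀ hεpos]; nlinarith
      exact ⟨⟨by linarith, by linarith⟩, h3⟩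
  have hSmeas : ∀ j : ℕ, MeasurableSet (S j) :=
    fun j => measurableSet_Ioo.prod measurableSet_Ioo
  have hdisj : Set.Pairwise ↑(Finset.range N) (Function.onFun Disjoint S) := by
    have key : ∀ i j : ℕ, i < j → Disjoint (S i) (S j) := by
      intro i j hij
      rw [Set.disjoint_left]
      rintro x ⟨⟨_, hx2⟩, _⟩ ⟨⟨hx3, _⟩, _⟩
      have hij' : (i : ℝ) + 1 ≤ j := by exact_mod_cast hij
      simp only [hα, hβ] at hx2 hx3
      nlinarith
    intro i _ j _ hij
    rcases lt_or_gt_of_ne hij with h' | h'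
    · exact key i j h'
    · exact (key j i h').symm
  -- integrability of continuous functions on the rods
  have hint : ∀ (f : ℝ × ℝ → ℝ), Continuous f → ∀ j : ℕ, IntegrableOn f (S j) := by
    intro f hf j
    have hK : IsCompact (Set.Icc (α j) (β j) ×ˢ Set.Icc (-l) 0) :=
      isCompact_Icc.prod isCompact_Icc
    exact (hf.continuousOn.integrableOn_compact hK).mono_set
      (Set.prod_mono Set.Ioo_subset_Icc_self Set.Ioo_subset_Icc_self)
  -- the floor of x₁/ε on rod j is j
  have hfloor : ∀ j : ℕ, ∀ t ∈ Set.Ioo (α j) (β j), (⌊t / ε⌋ : ℤ) = (j : ℤ) := by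
    rintro j t ⟨ht1, ht2⟩
    simp only [hα, hβ] at ht1 ht2
    rw [Int.floor_eq_iff]
    constructor
    · push_cast
      rw [le_div_iff₀ hεpos]; nlinarith
    · push_cast
      rw [div_lt_iff₀ hεpos]; nlinarith
  -- rewrite the weighted integrand on rod j
  have hYeq : ∀ j : ℕ, Set.EqOn (fun x : ℝ × ℝ => ε * (Y (x.1 / ε) * D x))
      (fun x : ℝ × ℝ => (ε * ((j : ℝ) + 1 / 2) - x.1) * D x) (S j) := by
    rintro j x ⟨hx1, _⟩
    have hf := hfloor j x.1 hx1
    have : Y (x.1 / ε) = -(x.1 / ε) + (j : ℝ) + 1 / 2 := by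
      rw [hY, hf]; push_cast; ring
    have hx : ε * (-(x.1 / ε) + (j : ℝ) + 1 / 2) = ε * ((j : ℝ) + 1 / 2) - x.1 := by
      field_simp
      ring
    calc ε * (Y (x.1 / ε) * D x) = (ε * (-(x.1 / ε) + (j : ℝ) + 1 / 2)) * D x := by
          rw [this]; ring
      _ = (ε * ((j : ℝ) + 1 / 2) - x.1) * D x := by rw [hx]
  -- the combined integrand on each rod
  set g : ℕ → ℝ × ℝ → ℝ := fun j x => v x - (ε * ((j : ℝ) + 1 / 2) - x.1) * D x with hgdef
  have hgcont : ∀ j : ℕ, Continuous (g j) := fun j =>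
    hvcont.sub ((continuous_const.sub continuous_fst).mul hDcont)
  -- integrability of the weighted integrand on each rod
  have hYint : ∀ j : ℕ, IntegrableOn (fun x : ℝ × ℝ => Y (x.1 / ε) * D x) (S j) := by
    intro j
    have hfc : Continuous (fun x : ℝ × ℝ => ε⁻¹ * ((ε * ((j : ℝ) + 1 / 2) - x.1) * D x)) :=
      continuous_const.mul ((continuous_const.sub continuous_fst).mul hDcont)
    refine (hint _ hfc j).congr_fun ?_ (hSmeas j)
    intro x hx
    have hx' : ε * (Y (x.1 / ε) * D x) = (ε * ((j : ℝ) + 1 / 2) - x.1) * D x := hYeq j hx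
    dsimp only
    rw [← hx']
    field_simp
  -- the derivative of the one-dimensional slice
  have hderiv : ∀ (x₂ t : ℝ), HasDerivAt (fun s => v (s, x₂)) (D (t, x₂)) t := by
    intro x₂ t
    have h1 : HasFDerivAt v (fderiv ℝ v (t, x₂)) (t, x₂) :=
      (hv.differentiable one_ne_zero (t, x₂)).hasFDerivAt
    have h2 : HasDerivAt (fun s : ℝ => (s, x₂)) ((1 : ℝ), (0 : ℝ)) t :=
      (hasDerivAt_id t).prodMk (hasDerivAt_const t x₂)
    exact h1.comp_hasDerivAt t h2
  -- inner one-dimensional integral via the fundamental theorem of calculus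
  have hinner : ∀ j : ℕ, ∀ x₂ : ℝ,
      (∫ x₁ in Set.Ioo (α j) (β j), g j (x₁, x₂)) =
        ε * h / 2 * (v (α j, x₂) + v (β j, x₂)) := by
    intro j x₂
    have hF : ∀ t ∈ Set.uIcc (α j) (β j),
        HasDerivAt (fun s => (s - ε * ((j : ℝ) + 1 / 2)) * v (s, x₂)) (g j (t, x₂)) t := by
      intro t _
      have := ((hasDerivAt_id t).sub_const (ε * ((j : ℝ) + 1 / 2))).fun_mul (hderiv x₂ t)
      refine this.congr_deriv ?_
      simp only [hgdef, id_eq]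
      ring
    have hIab : IntervalIntegrable (fun s => g j (s, x₂)) volume (α j) (β j) :=
      ((hgcont j).comp (continuous_id.prodMk continuous_const)).intervalIntegrable _ _
    have h1 : (∫ x₁ in Set.Ioo (α j) (β j), g j (x₁, x₂)) =
        ∫ x₁ in (α j)..(β j), g j (x₁, x₂) := by
      rw [intervalIntegral.integral_of_le (hαβ j).le, integral_Ioc_eq_integral_Ioo]
    rw [h1, intervalIntegral.integral_eq_sub_of_hasDerivAt hF hIab]
    simp only [hα, hβ]
    ring
  -- the key identity on each rod
  have key : ∀ j ∈ Finset.range N,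
      (∫ x in S j, v x) - ε * ∫ x in S j, Y (x.1 / ε) * D x =
        ε * h / 2 * ∫ x₂ in (-l)..0, (v (α j, x₂) + v (β j, x₂)) := by
    intro j _
    have step1 : ε * ∫ x in S j, Y (x.1 / ε) * D x =
        ∫ x in S j, (ε * ((j : ℝ) + 1 / 2) - x.1) * D x := by
      rw [← integral_const_mul]
      exact setIntegral_congr_fun (hSmeas j) (hYeq j)
    have hcint : IntegrableOn (fun x : ℝ × ℝ => (ε * ((j : ℝ) + 1 / 2) - x.1) * D x) (S j) :=
      hint _ ((continuous_const.sub continuous_fst).mul hDcont) j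
    have step2 : (∫ x in S j, v x) - ∫ x in S j, (ε * ((j : ℝ) + 1 / 2) - x.1) * D x =
        ∫ x in S j, g j x := (integral_sub (hint v hvcont j) hcint).symm
    have hrestrict : (volume : Measure (ℝ × ℝ)).restrict (S j) =
        (volume.restrict (Set.Ioo (α j) (β j))).prod (volume.restrict (Set.Ioo (-l) 0)) := by
      rw [hS, Measure.prod_restrict, ← Measure.volume_eq_prod]
    have hgint : Integrable (g j)
        ((volume.restrict (Set.Ioo (α j) (β j))).prod (volume.restrict (Set.Ioo (-l) 0))) := by
      rw [← hrestrict]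
      exact hint _ (hgcont j) j
    have step3 : (∫ x in S j, g j x) =
        ∫ x₂ in Set.Ioo (-l) 0, ∫ x₁ in Set.Ioo (α j) (β j), g j (x₁, x₂) := by
      rw [show (∫ x in S j, g j x) = ∫ x, g j x ∂((volume.restrict (Set.Ioo (α j) (β j))).prod
        (volume.restrict (Set.Ioo (-l) 0))) from by rw [← hrestrict]]
      exact integral_prod_symm (g j) hgint
    have step4 : (∫ x₂ in Set.Ioo (-l) 0, ∫ x₁ in Set.Ioo (α j) (β j), g j (x₁, x₂)) =
        ε * h / 2 * ∫ x₂ in Set.Ioo (-l) 0, (v (α j, x₂) + v (β j, x₂)) := by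
      rw [setIntegral_congr_fun measurableSet_Ioo (fun x₂ _ => hinner j x₂)]
      exact integral_const_mul _ _
    have step5 : (∫ x₂ in (-l)..0, (v (α j, x₂) + v (β j, x₂))) =
        ∫ x₂ in Set.Ioo (-l) 0, (v (α j, x₂) + v (β j, x₂)) := by
      rw [intervalIntegral.integral_of_le (by linarith : -l ≤ (0 : ℝ)),
        integral_Ioc_eq_integral_Ioo]
    rw [step1, step2, step3, step4, step5]
  -- assemble
  have hGunion : Gε = ⋃ j ∈ Finset.range N, S j := by
    rw [hG]; exact Set.iUnion₂_congr fun j _ => hset j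
  rw [hGunion,
    integral_biUnion_finset _ (fun j _ => hSmeas j) hdisj (fun j _ => hint v hvcont j),
    integral_biUnion_finset _ (fun j _ => hSmeas j) hdisj (fun j _ => hYint j),
    Finset.mul_sum, Finset.mul_sum, ← Finset.sum_sub_distrib]
  exact Finset.sum_congr rfl fun j hj => (key j hj).symm
end

section
/- There exists a constant C > 0, depending only on a, l and h (and in particular independent of N), such that for every positive integer N (with ε = a/N) and every continuously differentiable function v : ℝ² → ℝ one has Σ_{j=0}^{N−1} ∫_{−l}^{0} [ v(ε(j+(1−h)/2), x₂)² + v(ε(j+(1+h)/2), x₂)² ] dx₂ ≤ C ε^{−1} ∫_{G_ε} ( v(x)² + ‖∇v(x)‖² ) dx. (This is the trace estimate ‖v‖_{L²(S_ε)} ≤ C₁ ε^{−1/2} ‖v‖_{H¹(G_ε)}.) -/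
open MeasureTheory

section SignoriniAux

lemma sq_cont_integrableOn (f : ℝ → ℝ) (hf : Continuous f) (α β : ℝ) :
    IntegrableOn f (Set.Ioo α β) :=
  (hf.continuousOn.integrableOn_compact isCompact_Icc).mono_set Set.Ioo_subset_Icc_self

lemma trace1d (g : ℝ → ℝ) (hg : ContDiff ℝ 1 g) (α β : ℝ) (hαβ : α < β) :
    g α ^ 2 + g β ^ 2 ≤
      (2 / (β - α)) * (∫ t in Set.Ioo α β, g t ^ 2) +
        2 * ∫ t in Set.Ioo α β, (g t ^ 2 + deriv g t ^ 2) := by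
  have hgc : Continuous g := hg.continuous
  have hgd : Continuous (deriv g) := hg.continuous_deriv le_rfl
  have hFc : Continuous (fun t => g t ^ 2 + deriv g t ^ 2) := by fun_prop
  have hG : Continuous (fun t => 2 * g t * deriv g t) := by fun_prop
  set K := ∫ t in Set.Ioo α β, (g t ^ 2 + deriv g t ^ 2) with hK
  set J := ∫ t in Set.Ioo α β, g t ^ 2 with hJ
  have hKi : IntegrableOn (fun t => g t ^ 2 + deriv g t ^ 2) (Set.Ioo α β) :=
    sq_cont_integrableOn _ hFc α β
  have hJi : IntegrableOn (fun t => g t ^ 2) (Set.Ioo α β) :=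
    sq_cont_integrableOn _ (by fun_prop) α β
  have hKnn : 0 ≤ K := setIntegral_nonneg measurableSet_Ioo (fun t _ => by positivity)
  have ftc : ∀ p q : ℝ, g q ^ 2 - g p ^ 2 = ∫ s in p..q, 2 * g s * deriv g s := by
    intro p q
    rw [intervalIntegral.integral_eq_sub_of_hasDerivAt (f := fun s => g s ^ 2)
      (fun x _ => ?_) (hG.intervalIntegrable p q)]
    have h1 : HasDerivAt g (deriv g x) x := (hg.differentiable one_ne_zero x).hasDerivAt
    simpa using h1.fun_pow 2
  have ibound : ∀ p q : ℝ, α ≤ p → p ≤ q → q ≤ β →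
      |∫ s in p..q, 2 * g s * deriv g s| ≤ K := by
    intro p q hp hpq hq
    calc |∫ s in p..q, 2 * g s * deriv g s|
        ≤ ∫ s in p..q, |2 * g s * deriv g s| :=
          intervalIntegral.abs_integral_le_integral_abs hpq
      _ ≤ ∫ s in p..q, (g s ^ 2 + deriv g s ^ 2) := by
          apply intervalIntegral.integral_mono_on hpq
            ((hG.abs).intervalIntegrable p q) (hFc.intervalIntegrable p q)
          intro s _
          have h2 := two_mul_le_add_sq |g s| |deriv g s|
          have : |2 * g s * deriv g s| = 2 * |g s| * |deriv g s| := by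
            rw [abs_mul, abs_mul, abs_two]
          rw [this]
          simpa [sq_abs] using h2
      _ = ∫ s in Set.Ioo p q, (g s ^ 2 + deriv g s ^ 2) := by
          rw [intervalIntegral.integral_of_le hpq, integral_Ioc_eq_integral_Ioo]
      _ ≤ K := by
          apply setIntegral_mono_set hKi
          · exact Filter.Eventually.of_forall (fun t => by positivity)
          · exact HasSubset.Subset.eventuallyLE (Set.Ioo_subset_Ioo hp hq)
  have key : ∀ t ∈ Set.Ioo α β, g α ^ 2 + g β ^ 2 ≤ 2 * g t ^ 2 + 2 * K := by
    intro t ht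
    have h1 := ftc α t
    have h2 := ftc t β
    have b1 := ibound α t le_rfl ht.1.le ht.2.le
    have b2 := ibound t β ht.1.le ht.2.le le_rfl
    nlinarith [abs_le.1 b1, abs_le.1 b2]
  have hvol : (volume (Set.Ioo α β)).toReal = β - α := by
    rw [Real.volume_Ioo, ENNReal.toReal_ofReal (by linarith)]
  have hconst : ∫ _t in Set.Ioo α β, (g α ^ 2 + g β ^ 2) = (β - α) * (g α ^ 2 + g β ^ 2) := by
    rw [setIntegral_const, measureReal_def, hvol, smul_eq_mul]
  have hmono : ∫ _t in Set.Ioo α β, (g α ^ 2 + g β ^ 2)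
      ≤ ∫ t in Set.Ioo α β, (2 * g t ^ 2 + 2 * K) := by
    apply setIntegral_mono_on
    · exact integrableOn_const (by rw [Real.volume_Ioo]; exact ENNReal.ofReal_ne_top)
    · exact (hJi.const_mul 2).add
        (integrableOn_const (by rw [Real.volume_Ioo]; exact ENNReal.ofReal_ne_top))
    · exact measurableSet_Ioo
    · exact key
  have hrhs : ∫ t in Set.Ioo α β, (2 * g t ^ 2 + 2 * K) = 2 * J + (β - α) * (2 * K) := by
    rw [integral_add (hJi.const_mul 2)
      (integrableOn_const (by rw [Real.volume_Ioo]; exact ENNReal.ofReal_ne_top))]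
    rw [integral_const_mul, setIntegral_const, measureReal_def, hvol, smul_eq_mul, hJ]
  have h2 : (β - α) * (g α ^ 2 + g β ^ 2) ≤ 2 * J + (β - α) * (2 * K) := by
    rw [← hconst, ← hrhs]; exact hmono
  have hba : (0:ℝ) < β - α := by linarith
  have h3 : g α ^ 2 + g β ^ 2 ≤ (2 * J + (β - α) * (2 * K)) / (β - α) :=
    (le_div_iff₀ hba).2 (by linarith)
  calc g α ^ 2 + g β ^ 2 ≤ (2 * J + (β - α) * (2 * K)) / (β - α) := h3
    _ = 2 / (β - α) * J + 2 * K := by field_simp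

lemma rect_integrableOn (F : ℝ × ℝ → ℝ) (hF : Continuous F) (α β γ δ : ℝ) :
    IntegrableOn F (Set.Ioo α β ×ˢ Set.Ioo γ δ) := by
  have h1 : IntegrableOn F (Set.Icc (α, γ) (β, δ)) :=
    hF.continuousOn.integrableOn_compact isCompact_Icc
  apply h1.mono_set
  rw [← Set.Icc_prod_Icc]
  exact Set.prod_mono Set.Ioo_subset_Icc_self Set.Ioo_subset_Icc_self

lemma rect_fubini (F : ℝ × ℝ → ℝ) (hF : Continuous F) (α β γ δ : ℝ) :
    ∫ x in Set.Ioo α β ×ˢ Set.Ioo γ δ, F x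
      = ∫ x₂ in Set.Ioo γ δ, ∫ x₁ in Set.Ioo α β, F (x₁, x₂) := by
  have h2 : Integrable F (((volume : Measure ℝ).restrict (Set.Ioo α β)).prod
      ((volume : Measure ℝ).restrict (Set.Ioo γ δ))) := by
    have := rect_integrableOn F hF α β γ δ
    rwa [Measure.prod_restrict, ← Measure.volume_eq_prod]
  calc ∫ x in Set.Ioo α β ×ˢ Set.Ioo γ δ, F x
      = ∫ x, F x ∂(((volume : Measure ℝ).restrict (Set.Ioo α β)).prod
          ((volume : Measure ℝ).restrict (Set.Ioo γ δ))) := by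
        rw [Measure.prod_restrict, ← Measure.volume_eq_prod]
    _ = ∫ x₁ in Set.Ioo α β, ∫ x₂ in Set.Ioo γ δ, F (x₁, x₂) := integral_prod F h2
    _ = ∫ x₂ in Set.Ioo γ δ, ∫ x₁ in Set.Ioo α β, F (x₁, x₂) :=
        integral_integral_swap (f := fun x₁ x₂ => F (x₁, x₂)) h2

lemma rect_marginal_integrable (F : ℝ × ℝ → ℝ) (hF : Continuous F) (α β γ δ : ℝ) :
    IntegrableOn (fun x₂ => ∫ x₁ in Set.Ioo α β, F (x₁, x₂)) (Set.Ioo γ δ) := by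
  have h2 : Integrable F (((volume : Measure ℝ).restrict (Set.Ioo α β)).prod
      ((volume : Measure ℝ).restrict (Set.Ioo γ δ))) := by
    have := rect_integrableOn F hF α β γ δ
    rwa [Measure.prod_restrict, ← Measure.volume_eq_prod]
  exact h2.swap.integral_prod_left

lemma partial_deriv_sq_le (v : ℝ × ℝ → ℝ) (hv : ContDiff ℝ 1 v) (x₂ sx : ℝ) :
    deriv (fun x₁ : ℝ => v (x₁, x₂)) sx ^ 2 ≤ ‖fderiv ℝ v (sx, x₂)‖ ^ 2 := by
  have h1 : HasFDerivAt v (fderiv ℝ v (sx, x₂)) (sx, x₂) :=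
    (hv.differentiable one_ne_zero _).hasFDerivAt
  have h2 : HasDerivAt (fun s : ℝ => (s, x₂)) ((1:ℝ), (0:ℝ)) sx :=
    (hasDerivAt_id sx).prodMk (hasDerivAt_const _ _)
  have h3 : HasDerivAt (fun x₁ : ℝ => v (x₁, x₂)) (fderiv ℝ v (sx, x₂) (1, 0)) sx :=
    h1.comp_hasDerivAt sx h2
  rw [h3.deriv]
  have h4 : ‖fderiv ℝ v (sx, x₂) (1, 0)‖ ≤ ‖fderiv ℝ v (sx, x₂)‖ * ‖((1:ℝ), (0:ℝ))‖ :=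
    (fderiv ℝ v (sx, x₂)).le_opNorm _
  have h5 : ‖((1:ℝ), (0:ℝ))‖ = 1 := by simp [Prod.norm_def]
  rw [h5, mul_one] at h4
  rw [Real.norm_eq_abs] at h4
  nlinarith [norm_nonneg (fderiv ℝ v (sx, x₂)), h4, sq_abs (fderiv ℝ v (sx, x₂) (1, 0)),
    abs_nonneg (fderiv ℝ v (sx, x₂) (1, 0))]

end SignoriniAux

/-- Uniform trace estimate `‖v‖²_{L²(S_ε)} ≤ C ε⁻¹ ‖v‖²_{H¹(G_ε)}` on the vertical sides
of the thin rods, with a constant depending only on `a`, `l`, `h`. -/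
theorem signorini_trace_estimate
    (a l h : ℝ) (ha : 0 < a) (hl : 0 < l) (hh : h ∈ Set.Ioo (0 : ℝ) 1) :
    ∃ C : ℝ, 0 < C ∧
      ∀ (N : ℕ), 0 < N →
        ∀ ε : ℝ, ε = a / N →
          ∀ Gε : Set (ℝ × ℝ),
            Gε = ⋃ j ∈ Finset.range N,
              {x : ℝ × ℝ | |x.1 / ε - ((j : ℝ) + 1 / 2)| < h / 2 ∧ x.2 ∈ Set.Ioo (-l) 0} →
            ∀ v : ℝ × ℝ → ℝ, ContDiff ℝ 1 v →
              ∑ j ∈ Finset.range N,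
                  ∫ x₂ in (-l)..0,
                    ((v (ε * ((j : ℝ) + (1 - h) / 2), x₂)) ^ 2 +
                      (v (ε * ((j : ℝ) + (1 + h) / 2), x₂)) ^ 2) ≤
                C * ε⁻¹ * ∫ x in Gε, ((v x) ^ 2 + ‖fderiv ℝ v x‖ ^ 2) := by
  obtain ⟨hh0, hh1⟩ := hh
  refine ⟨2 / h + 2 * a, by positivity, ?_⟩
  intro N hN ε hε Gε hG v hv
  have hNpos : (0:ℝ) < N := by exact_mod_cast hN
  have hεpos : 0 < ε := by rw [hε]; positivity
  have hεa : ε ≤ a := by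
    rw [hε]; exact div_le_self ha.le (by exact_mod_cast hN)
  have hFc : Continuous (fun x : ℝ × ℝ => v x ^ 2 + ‖fderiv ℝ v x‖ ^ 2) :=
    (hv.continuous.pow 2).add (((hv.continuous_fderiv one_ne_zero).norm).pow 2)
  have hFnn : ∀ x : ℝ × ℝ, 0 ≤ v x ^ 2 + ‖fderiv ℝ v x‖ ^ 2 := fun x => by positivity
  have hABlt : ∀ j : ℕ, ε * ((j:ℝ) + (1 - h) / 2) < ε * ((j:ℝ) + (1 + h) / 2) := by
    intro j
    apply mul_lt_mul_of_pos_left (by linarith) hεpos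
  -- set identification
  have hset : ∀ j : ℕ,
      {x : ℝ × ℝ | |x.1 / ε - ((j : ℝ) + 1 / 2)| < h / 2 ∧ x.2 ∈ Set.Ioo (-l) 0}
        = Set.Ioo (ε * ((j:ℝ) + (1 - h) / 2)) (ε * ((j:ℝ) + (1 + h) / 2)) ×ˢ Set.Ioo (-l) 0 := by
    intro j
    ext x
    simp only [Set.mem_setOf_eq, Set.mem_prod, Set.mem_Ioo, abs_lt]
    have hx : x.1 / ε * ε = x.1 := div_mul_cancel₀ _ hεpos.ne'
    constructor
    · rintro ⟨⟨h1, h2⟩, h3⟩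
      refine ⟨⟨?_, ?_⟩, h3⟩
      · nlinarith [mul_lt_mul_of_pos_right h1 hεpos]
      · nlinarith [mul_lt_mul_of_pos_right h2 hεpos]
    · rintro ⟨⟨h1, h2⟩, h3⟩
      refine ⟨⟨?_, ?_⟩, h3⟩
      · nlinarith [hx, hεpos]
      · nlinarith [hx, hεpos]
  have hGε : Gε = ⋃ j ∈ Finset.range N,
      Set.Ioo (ε * ((j:ℝ) + (1 - h) / 2)) (ε * ((j:ℝ) + (1 + h) / 2)) ×ˢ Set.Ioo (-l) 0 := by
    rw [hG]
    exact Set.iUnion₂_congr fun j _ => hset j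
  -- constant comparison
  have keyc : 2 / (ε * h) + 2 ≤ (2 / h + 2 * a) * ε⁻¹ := by
    have e1 : 2 / (ε * h) = 2 / h * ε⁻¹ := by
      field_simp
    have e2 : (2:ℝ) ≤ 2 * a * ε⁻¹ := by
      have h1 : (1:ℝ) ≤ a / ε := (one_le_div hεpos).2 hεa
      have h2 : 2 * (a / ε) = 2 * a * ε⁻¹ := by rw [div_eq_mul_inv]; ring
      linarith
    have e3 : (2 / h + 2 * a) * ε⁻¹ = 2 / h * ε⁻¹ + 2 * a * ε⁻¹ := by ring
    linarith
  -- per rod estimate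
  have hj : ∀ j ∈ Finset.range N,
      (∫ x₂ in (-l)..0,
        ((v (ε * ((j : ℝ) + (1 - h) / 2), x₂)) ^ 2 +
          (v (ε * ((j : ℝ) + (1 + h) / 2), x₂)) ^ 2))
      ≤ (2 / h + 2 * a) * ε⁻¹ *
          ∫ x in Set.Ioo (ε * ((j:ℝ) + (1 - h) / 2)) (ε * ((j:ℝ) + (1 + h) / 2)) ×ˢ
            Set.Ioo (-l) 0, (v x ^ 2 + ‖fderiv ℝ v x‖ ^ 2) := by
    intro j _
    set α := ε * ((j:ℝ) + (1 - h) / 2) with hα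
    set β := ε * ((j:ℝ) + (1 + h) / 2) with hβ
    have hαβ : α < β := hABlt j
    have hβα : β - α = ε * h := by rw [hα, hβ]; ring
    have hpt : ∀ x₂ : ℝ, v (α, x₂) ^ 2 + v (β, x₂) ^ 2
        ≤ (2 / h + 2 * a) * ε⁻¹ *
            ∫ x₁ in Set.Ioo α β, (v (x₁, x₂) ^ 2 + ‖fderiv ℝ v (x₁, x₂)‖ ^ 2) := by
      intro x₂
      have hg : ContDiff ℝ 1 (fun x₁ : ℝ => v (x₁, x₂)) :=
        hv.comp (contDiff_id.prodMk contDiff_const)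
      have htr := trace1d _ hg α β hαβ
      have hFi1 : IntegrableOn (fun x₁ => v (x₁, x₂) ^ 2 + ‖fderiv ℝ v (x₁, x₂)‖ ^ 2)
          (Set.Ioo α β) :=
        sq_cont_integrableOn _ (hFc.comp (continuous_id.prodMk continuous_const)) _ _
      have hIF : 0 ≤ ∫ x₁ in Set.Ioo α β, (v (x₁, x₂) ^ 2 + ‖fderiv ℝ v (x₁, x₂)‖ ^ 2) :=
        setIntegral_nonneg measurableSet_Ioo fun x _ => hFnn _
      have m1 : ∫ t in Set.Ioo α β, v (t, x₂) ^ 2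
          ≤ ∫ x₁ in Set.Ioo α β, (v (x₁, x₂) ^ 2 + ‖fderiv ℝ v (x₁, x₂)‖ ^ 2) := by
        apply integral_mono_of_nonneg (Filter.Eventually.of_forall fun t => by positivity) hFi1
        exact Filter.Eventually.of_forall fun t => by
          dsimp only
          nlinarith [norm_nonneg (fderiv ℝ v (t, x₂))]
      have m2 : ∫ t in Set.Ioo α β,
            (v (t, x₂) ^ 2 + deriv (fun x₁ : ℝ => v (x₁, x₂)) t ^ 2)
          ≤ ∫ x₁ in Set.Ioo α β, (v (x₁, x₂) ^ 2 + ‖fderiv ℝ v (x₁, x₂)‖ ^ 2) := by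
        apply integral_mono_of_nonneg (Filter.Eventually.of_forall fun t => by positivity) hFi1
        exact Filter.Eventually.of_forall fun t => by
          dsimp only
          have := partial_deriv_sq_le v hv x₂ t
          linarith
      have hc1 : (0:ℝ) ≤ 2 / (ε * h) := by positivity
      calc v (α, x₂) ^ 2 + v (β, x₂) ^ 2
          ≤ 2 / (β - α) * (∫ t in Set.Ioo α β, v (t, x₂) ^ 2) +
              2 * ∫ t in Set.Ioo α β,
                (v (t, x₂) ^ 2 + deriv (fun x₁ : ℝ => v (x₁, x₂)) t ^ 2) := htr
        _ ≤ 2 / (ε * h) * (∫ x₁ in Set.Ioo α β, (v (x₁, x₂) ^ 2 + ‖fderiv ℝ v (x₁, x₂)‖ ^ 2)) +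
              2 * ∫ x₁ in Set.Ioo α β, (v (x₁, x₂) ^ 2 + ‖fderiv ℝ v (x₁, x₂)‖ ^ 2) := by
            rw [hβα] at htr ⊢
            exact add_le_add (mul_le_mul_of_nonneg_left m1 hc1)
              (mul_le_mul_of_nonneg_left m2 (by norm_num))
        _ = (2 / (ε * h) + 2) *
              ∫ x₁ in Set.Ioo α β, (v (x₁, x₂) ^ 2 + ‖fderiv ℝ v (x₁, x₂)‖ ^ 2) := by ring
        _ ≤ (2 / h + 2 * a) * ε⁻¹ *
              ∫ x₁ in Set.Ioo α β, (v (x₁, x₂) ^ 2 + ‖fderiv ℝ v (x₁, x₂)‖ ^ 2) :=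
            mul_le_mul_of_nonneg_right keyc hIF
    have hmarg := rect_marginal_integrable _ hFc α β (-l) 0
    rw [intervalIntegral.integral_of_le (by linarith : -l ≤ (0:ℝ)), integral_Ioc_eq_integral_Ioo]
    calc ∫ x₂ in Set.Ioo (-l) 0, (v (α, x₂) ^ 2 + v (β, x₂) ^ 2)
        ≤ ∫ x₂ in Set.Ioo (-l) 0, ((2 / h + 2 * a) * ε⁻¹ *
            ∫ x₁ in Set.Ioo α β, (v (x₁, x₂) ^ 2 + ‖fderiv ℝ v (x₁, x₂)‖ ^ 2)) :=
          integral_mono_of_nonneg (Filter.Eventually.of_forall fun x₂ => by positivity)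
            (hmarg.const_mul _) (Filter.Eventually.of_forall fun x₂ => hpt x₂)
      _ = (2 / h + 2 * a) * ε⁻¹ * ∫ x₂ in Set.Ioo (-l) 0,
            ∫ x₁ in Set.Ioo α β, (v (x₁, x₂) ^ 2 + ‖fderiv ℝ v (x₁, x₂)‖ ^ 2) :=
          integral_const_mul _ _
      _ = (2 / h + 2 * a) * ε⁻¹ *
            ∫ x in Set.Ioo α β ×ˢ Set.Ioo (-l) 0, (v x ^ 2 + ‖fderiv ℝ v x‖ ^ 2) := by
          rw [rect_fubini _ hFc]
  -- disjointness
  have hdisj : Set.Pairwise ↑(Finset.range N)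
      (Function.onFun Disjoint fun j : ℕ =>
        Set.Ioo (ε * ((j:ℝ) + (1 - h) / 2)) (ε * ((j:ℝ) + (1 + h) / 2)) ×ˢ Set.Ioo (-l) 0) := by
    intro i _ j _ hij
    apply Set.disjoint_left.2
    rintro x hx hy
    obtain ⟨hx1, -⟩ := hx
    obtain ⟨hy1, -⟩ := hy
    simp only [Set.mem_Ioo] at hx1 hy1
    rcases hij.lt_or_gt with hlt | hlt
    · have hij' : (i:ℝ) + 1 ≤ j := by exact_mod_cast hlt
      have : ε * ((i:ℝ) + (1 + h) / 2) ≤ ε * ((j:ℝ) + (1 - h) / 2) :=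
        mul_le_mul_of_nonneg_left (by linarith) hεpos.le
      linarith [hx1.2, hy1.1]
    · have hij' : (j:ℝ) + 1 ≤ i := by exact_mod_cast hlt
      have : ε * ((j:ℝ) + (1 + h) / 2) ≤ ε * ((i:ℝ) + (1 - h) / 2) :=
        mul_le_mul_of_nonneg_left (by linarith) hεpos.le
      linarith [hy1.2, hx1.1]
  calc ∑ j ∈ Finset.range N,
        ∫ x₂ in (-l)..0,
          ((v (ε * ((j : ℝ) + (1 - h) / 2), x₂)) ^ 2 +
            (v (ε * ((j : ℝ) + (1 + h) / 2), x₂)) ^ 2)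
      ≤ ∑ j ∈ Finset.range N, ((2 / h + 2 * a) * ε⁻¹ *
          ∫ x in Set.Ioo (ε * ((j:ℝ) + (1 - h) / 2)) (ε * ((j:ℝ) + (1 + h) / 2)) ×ˢ
            Set.Ioo (-l) 0, (v x ^ 2 + ‖fderiv ℝ v x‖ ^ 2)) := Finset.sum_le_sum hj
    _ = (2 / h + 2 * a) * ε⁻¹ * ∑ j ∈ Finset.range N,
          ∫ x in Set.Ioo (ε * ((j:ℝ) + (1 - h) / 2)) (ε * ((j:ℝ) + (1 + h) / 2)) ×ˢ
            Set.Ioo (-l) 0, (v x ^ 2 + ‖fderiv ℝ v x‖ ^ 2) := by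
        rw [Finset.mul_sum]
    _ = (2 / h + 2 * a) * ε⁻¹ * ∫ x in Gε, (v x ^ 2 + ‖fderiv ℝ v x‖ ^ 2) := by
        rw [hGε, integral_biUnion_finset (Finset.range N)
          (fun j _ => measurableSet_Ioo.prod measurableSet_Ioo) hdisj
          (fun j _ => rect_integrableOn _ hFc _ _ _ _)]
end

section
/- There exists a constant C₀ > 0, depending only on a, l and γ, such that for every continuously differentiable function u : ℝ² → ℝ satisfying u(x₁, −l) = 0 for all x₁ ∈ [0,a], one has ∫_{Ω₁} u(x)² dx ≤ C₀ ( ∫_{Ω₀} ‖∇u(x)‖² dx + ∫_{D₀} (∂u/∂x₂)(x)² dx ). -/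
open MeasureTheory Set

private lemma aux_box {f : ℝ × ℝ → ℝ} (hf : Continuous f)
    {s : Set (ℝ × ℝ)} {p q : ℝ × ℝ} (hs : s ⊆ Set.Icc p q) :
    IntegrableOn f s :=
  (hf.continuousOn.integrableOn_compact isCompact_Icc).mono_set hs

private lemma aux_box1 {f : ℝ → ℝ} (hf : Continuous f)
    {s : Set ℝ} {p q : ℝ} (hs : s ⊆ Set.Icc p q) :
    IntegrableOn f s :=
  (hf.continuousOn.integrableOn_compact isCompact_Icc).mono_set hs

private lemma aux_open (α β c : ℝ) {φ : ℝ → ℝ} (hφ : Continuous φ) :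
    IsOpen {p : ℝ × ℝ | p.1 ∈ Set.Ioo α β ∧ p.2 ∈ Set.Ioo c (φ p.1)} := by
  have : {p : ℝ × ℝ | p.1 ∈ Set.Ioo α β ∧ p.2 ∈ Set.Ioo c (φ p.1)}
      = ({p : ℝ × ℝ | α < p.1} ∩ {p | p.1 < β}) ∩ ({p | c < p.2} ∩ {p | p.2 < φ p.1}) := by
    ext p; simp only [Set.mem_setOf_eq, Set.mem_Ioo, Set.mem_inter_iff]
  rw [this]
  exact (((isOpen_lt continuous_const continuous_fst).inter
    (isOpen_lt continuous_fst continuous_const)).inter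
    ((isOpen_lt continuous_const continuous_snd).inter
    (isOpen_lt continuous_snd (hφ.comp continuous_fst))))

private lemma aux_cs {c d : ℝ} (hcd : c ≤ d) {f : ℝ → ℝ} (hf : Continuous f) :
    (∫ t in Set.Ioc c d, f t) ^ 2 ≤ (d - c) * ∫ t in Set.Ioc c d, (f t) ^ 2 := by
  set μ := volume.restrict (Set.Ioc c d) with hμ
  haveI : IsFiniteMeasure μ := by
    constructor
    rw [hμ, Measure.restrict_apply_univ, Real.volume_Ioc]
    exact ENNReal.ofReal_lt_top
  have hpq : Real.HolderConjugate 2 2 := Real.HolderConjugate.two_two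
  obtain ⟨K, hK⟩ : ∃ K, ∀ x ∈ Set.Icc c d, ‖f x‖ ≤ K :=
    isCompact_Icc.exists_bound_of_continuousOn hf.continuousOn
  have h1 : MemLp (fun t => |f t|) (ENNReal.ofReal 2) μ := by
    refine MemLp.of_bound hf.abs.aestronglyMeasurable K ?_
    rw [hμ]
    refine (ae_restrict_iff' measurableSet_Ioc).2 (Filter.Eventually.of_forall fun t ht => ?_)
    simpa [abs_abs] using hK t (Set.Ioc_subset_Icc_self ht)
  have h2 : MemLp (fun _ : ℝ => (1 : ℝ)) (ENNReal.ofReal 2) μ := memLp_const 1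
  have key := integral_mul_le_Lp_mul_Lq_of_nonneg hpq
    (Filter.Eventually.of_forall fun t => abs_nonneg (f t))
    (Filter.Eventually.of_forall fun _ => zero_le_one) h1 h2
  have e1 : ∫ t, |f t| * 1 ∂μ = ∫ t, |f t| ∂μ := by simp
  have e2 : ∫ t, |f t| ^ (2 : ℝ) ∂μ = ∫ t, (f t) ^ 2 ∂μ := by
    refine integral_congr_ae (Filter.Eventually.of_forall fun t => ?_)
    show |f t| ^ (2 : ℝ) = (f t) ^ 2
    rw [show ((2:ℝ)) = ((2:ℕ):ℝ) by norm_num, Real.rpow_natCast, sq_abs]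
  have e3 : ∫ _t, (1 : ℝ) ^ (2 : ℝ) ∂μ = d - c := by
    simp [hμ, Real.volume_Ioc, ENNReal.toReal_ofReal (sub_nonneg.2 hcd), hcd]
  rw [e1, e2, e3] at key
  have hA : 0 ≤ ∫ t, (f t) ^ 2 ∂μ := integral_nonneg fun t => sq_nonneg _
  have habs : |∫ t, f t ∂μ| ≤ ∫ t, |f t| ∂μ := by
    simpa using norm_integral_le_integral_norm (μ := μ) f
  have hfin : (∫ t, |f t| ∂μ) ^ 2 ≤ (d - c) * ∫ t, (f t) ^ 2 ∂μ := by
    have hnn : 0 ≤ ∫ t, |f t| ∂μ := integral_nonneg fun t => abs_nonneg _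
    calc (∫ t, |f t| ∂μ) ^ 2
        ≤ ((∫ t, (f t) ^ 2 ∂μ) ^ (1/2 : ℝ) * (d - c) ^ (1/2 : ℝ)) ^ 2 :=
          pow_le_pow_left₀ hnn key 2
      _ = (d - c) * ∫ t, (f t) ^ 2 ∂μ := by
          rw [mul_pow, ← Real.rpow_natCast ((∫ t, (f t) ^ 2 ∂μ) ^ (1/2 : ℝ)) 2,
            ← Real.rpow_natCast ((d - c) ^ (1/2 : ℝ)) 2,
            ← Real.rpow_mul hA, ← Real.rpow_mul (sub_nonneg.2 hcd)]
          norm_num [mul_comm]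
  calc (∫ t in Set.Ioc c d, f t) ^ 2 = |∫ t, f t ∂μ| ^ 2 := by rw [sq_abs]
    _ ≤ (∫ t, |f t| ∂μ) ^ 2 := pow_le_pow_left₀ (abs_nonneg _) habs 2
    _ ≤ (d - c) * ∫ t, (f t) ^ 2 ∂μ := hfin

private lemma aux_ftc {u : ℝ × ℝ → ℝ} (hu : ContDiff ℝ 1 u) (x₁ c x₂ : ℝ)
    (hc : u (x₁, c) = 0) (hle : c ≤ x₂) :
    u (x₁, x₂) = ∫ t in Set.Ioc c x₂, fderiv ℝ u (x₁, t) (0, 1) := by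
  have key : ∀ t ∈ Set.uIcc c x₂,
      HasDerivAt (fun s => u (x₁, s)) (fderiv ℝ u (x₁, t) (0, 1)) t := fun t _ =>
    (hu.differentiable one_ne_zero (x₁, t)).hasFDerivAt.comp_hasDerivAt t
      ((hasDerivAt_const t x₁).prodMk (hasDerivAt_id t))
  have hcont : Continuous fun t => fderiv ℝ u (x₁, t) (0, 1) :=
    Continuous.clm_apply
      ((hu.continuous_fderiv one_ne_zero).comp (continuous_const.prodMk continuous_id))
      continuous_const
  have h := intervalIntegral.integral_eq_sub_of_hasDerivAt key
    (hcont.intervalIntegrable c x₂)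
  rw [intervalIntegral.integral_of_le hle] at h
  rw [h, hc, sub_zero]

private lemma aux_fubini (α β c C : ℝ) {φ : ℝ → ℝ} (hφ : Continuous φ)
    (hφle : ∀ x, φ x ≤ C) {h : ℝ × ℝ → ℝ} (hh : Continuous h) :
    ∫ p in {p : ℝ × ℝ | p.1 ∈ Set.Ioo α β ∧ p.2 ∈ Set.Ioo c (φ p.1)}, h p
      = ∫ x in Set.Ioo α β, ∫ t in Set.Ioo c (φ x), h (x, t) := by
  set T := {p : ℝ × ℝ | p.1 ∈ Set.Ioo α β ∧ p.2 ∈ Set.Ioo c (φ p.1)} with hT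
  have hTm : MeasurableSet T := (aux_open α β c hφ).measurableSet
  have hTsub : T ⊆ Set.Icc (α, c) (β, C) := by
    rintro ⟨x, y⟩ ⟨hx, hy⟩
    simp only [Set.mem_Icc, Prod.le_def]
    exact ⟨⟨hx.1.le, hy.1.le⟩, hx.2.le, hy.2.le.trans (hφle x)⟩
  have hint : IntegrableOn h T := aux_box hh hTsub
  have hind : Integrable (T.indicator h) := (integrable_indicator_iff hTm).2 hint
  rw [← integral_indicator hTm]
  rw [Measure.volume_eq_prod] at hind ⊢
  rw [integral_prod _ hind]
  have hpt : ∀ x, (∫ y, T.indicator h (x, y)) =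
      (Set.Ioo α β).indicator (fun x => ∫ t in Set.Ioo c (φ x), h (x, t)) x := by
    intro x
    by_cases hx : x ∈ Set.Ioo α β
    · rw [Set.indicator_of_mem hx]
      have e : ∀ y, T.indicator h (x, y) = (Set.Ioo c (φ x)).indicator (fun t => h (x, t)) y := by
        intro y
        by_cases hy : y ∈ Set.Ioo c (φ x)
        · rw [Set.indicator_of_mem (show (x, y) ∈ T from ⟨hx, hy⟩),
            Set.indicator_of_mem hy]
        · rw [Set.indicator_of_notMem (fun hmem => hy hmem.2),
            Set.indicator_of_notMem hy]
      simp_rw [e]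
      exact integral_indicator measurableSet_Ioo
    · rw [Set.indicator_of_notMem hx]
      have e : ∀ y, T.indicator h (x, y) = 0 := fun y =>
        Set.indicator_of_notMem (fun hmem => hx hmem.1) _
      simp_rw [e]
      exact integral_zero _ _
  simp_rw [hpt]
  exact integral_indicator measurableSet_Ioo

/-- Poincaré-type inequality underlying the norm of the partly anisotropic space
`𝓗(Ω₁, D₀; I_l)`: functions vanishing on the bottom side `I_l` of `D₀` are controlled in
`L²(Ω₁)` by the full gradient on `Ω₀` and only the vertical derivative on `D₀`. -/
theorem signorini_anisotropic_poincare
    (a l : ℝ) (ha : 0 < a) (hl : 0 < l)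
    (γ : ℝ → ℝ) (hγ : ContDiffOn ℝ 1 γ (Set.Icc 0 a))
    (hγpos : ∀ x₁ ∈ Set.Icc (0 : ℝ) a, 0 < γ x₁)
    (Ω₀ D₀ : Set (ℝ × ℝ))
    (hΩ₀ : Ω₀ = {x : ℝ × ℝ | 0 < x.1 ∧ x.1 < a ∧ 0 < x.2 ∧ x.2 < γ x.1})
    (hD₀ : D₀ = Set.Ioo (0 : ℝ) a ×ˢ Set.Ioo (-l) 0) :
    ∃ C₀ : ℝ, 0 < C₀ ∧
      ∀ u : ℝ × ℝ → ℝ, ContDiff ℝ 1 u →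
        (∀ x₁ ∈ Set.Icc (0 : ℝ) a, u (x₁, -l) = 0) →
        (∫ x in Ω₀ ∪ D₀, (u x) ^ 2) ≤
          C₀ * ((∫ x in Ω₀, ‖fderiv ℝ u x‖ ^ 2) + ∫ x in D₀, (fderiv ℝ u x (0, 1)) ^ 2) := by
  obtain ⟨x₀, hx₀, hmax⟩ :=
    isCompact_Icc.exists_isMaxOn (Set.nonempty_Icc.2 ha.le) hγ.continuousOn
  set M := γ x₀ with hMdef
  have hMpos : 0 < M := hγpos x₀ hx₀
  have hMle : ∀ x ∈ Set.Icc (0:ℝ) a, γ x ≤ M := fun x hx => hmax hx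
  set cl : ℝ → ℝ := fun x => max 0 (min x a) with hcldef
  have hclmem : ∀ x, cl x ∈ Set.Icc (0:ℝ) a := fun x =>
    ⟨le_max_left _ _, max_le ha.le (min_le_right _ _)⟩
  have hclcont : Continuous cl := continuous_const.max (continuous_id.min continuous_const)
  set γ' : ℝ → ℝ := fun x => γ (cl x) with hγ'def
  have hγ'cont : Continuous γ' := hγ.continuousOn.comp_continuous hclcont hclmem
  have hγ'pos : ∀ x, 0 < γ' x := fun x => hγpos _ (hclmem x)
  have hγ'leM : ∀ x, γ' x ≤ M := fun x => hMle _ (hclmem x)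
  have hγ'eq : ∀ x ∈ Set.Icc (0:ℝ) a, γ' x = γ x := by
    intro x hx
    simp only [hγ'def, hcldef]
    rw [min_eq_left hx.2, max_eq_right hx.1]
  have hMl : (0:ℝ) ≤ M + l := by linarith
  refine ⟨(M + l) ^ 2, by positivity, ?_⟩
  intro u hu hu0
  set h : ℝ × ℝ → ℝ := fun p => (fderiv ℝ u p (0, 1)) ^ 2 with hhdef
  have hgcont : Continuous fun p : ℝ × ℝ => fderiv ℝ u p (0, 1) :=
    Continuous.clm_apply (hu.continuous_fderiv one_ne_zero) continuous_const
  have hhcont : Continuous h := hgcont.pow 2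
  have hhnn : ∀ p, 0 ≤ h p := fun p => sq_nonneg _
  have hg1 : ∀ x₁ : ℝ, Continuous fun t => fderiv ℝ u (x₁, t) (0, 1) := fun x₁ =>
    hgcont.comp (continuous_const.prodMk continuous_id)
  have hnormcont : Continuous fun p : ℝ × ℝ => ‖fderiv ℝ u p‖ ^ 2 :=
    ((hu.continuous_fderiv one_ne_zero).norm.pow 2)
  -- the region R below the graph
  set R : Set (ℝ × ℝ) := {p : ℝ × ℝ | p.1 ∈ Set.Ioo 0 a ∧ p.2 ∈ Set.Ioo (-l) (γ' p.1)}
    with hRdef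
  have hRm : MeasurableSet R := (aux_open 0 a (-l) hγ'cont).measurableSet
  have hRbox : R ⊆ Set.Icc ((0:ℝ), -l) (a, M) := by
    rintro ⟨x, y⟩ ⟨hx, hy⟩
    simp only [Set.mem_Icc, Prod.le_def]
    exact ⟨⟨hx.1.le, hy.1.le⟩, hx.2.le, hy.2.le.trans (hγ'leM x)⟩
  -- vertical slices
  set F : ℝ → ℝ := fun x => ∫ t in Set.Ioo (-l) (γ' x), h (x, t) with hFdef
  set F₁ : ℝ → ℝ := fun x => ∫ t in Set.Ioo (-l) 0, h (x, t) with hF₁def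
  set F₂ : ℝ → ℝ := fun x => ∫ t in Set.Ioo 0 (γ' x), h (x, t) with hF₂def
  have huncurry : Continuous (Function.uncurry fun x t => h (x, t)) := hhcont
  have hFcont : Continuous F := by
    have e : F = fun x => ∫ t in (-l)..(γ' x), h (x, t) := by
      funext x
      rw [intervalIntegral.integral_of_le (by linarith [hγ'pos x] : (-l) ≤ γ' x),
        integral_Ioc_eq_integral_Ioo]
    rw [e]
    exact intervalIntegral.continuous_parametric_intervalIntegral_of_continuous (μ := volume)
      huncurry hγ'cont
  have hF₁cont : Continuous F₁ := by
    have e : F₁ = fun x => ∫ t in (-l)..(0:ℝ), h (x, t) := by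
      funext x
      rw [intervalIntegral.integral_of_le (by linarith : (-l) ≤ (0:ℝ)),
        integral_Ioc_eq_integral_Ioo]
    rw [e]
    exact intervalIntegral.continuous_parametric_intervalIntegral_of_continuous (μ := volume)
      huncurry continuous_const
  have hF₂cont : Continuous F₂ := by
    have e : F₂ = fun x => ∫ t in (0:ℝ)..(γ' x), h (x, t) := by
      funext x
      rw [intervalIntegral.integral_of_le (hγ'pos x).le, integral_Ioc_eq_integral_Ioo]
    rw [e]
    exact intervalIntegral.continuous_parametric_intervalIntegral_of_continuous (μ := volume)
      huncurry hγ'cont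
  have hFnn : ∀ x, 0 ≤ F x := fun x =>
    setIntegral_nonneg measurableSet_Ioo fun t _ => hhnn _
  have hsplit : ∀ x, F x = F₁ x + F₂ x := by
    intro x
    have c1 : Continuous fun t => h (x, t) := hhcont.comp (continuous_const.prodMk continuous_id)
    have hadd := intervalIntegral.integral_add_adjacent_intervals
      (c1.intervalIntegrable (μ := volume) (-l) 0) (c1.intervalIntegrable (μ := volume) 0 (γ' x))
    have e0 : F x = ∫ t in (-l)..(γ' x), h (x, t) := by
      rw [hFdef, intervalIntegral.integral_of_le (by linarith [hγ'pos x] : (-l) ≤ γ' x),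
        integral_Ioc_eq_integral_Ioo]
    have e1 : F₁ x = ∫ t in (-l)..(0:ℝ), h (x, t) := by
      rw [hF₁def, intervalIntegral.integral_of_le (by linarith : (-l) ≤ (0:ℝ)),
        integral_Ioc_eq_integral_Ioo]
    have e2 : F₂ x = ∫ t in (0:ℝ)..(γ' x), h (x, t) := by
      rw [hF₂def, intervalIntegral.integral_of_le (hγ'pos x).le, integral_Ioc_eq_integral_Ioo]
    rw [e0, e1, e2, hadd]
  -- the pointwise bound on R
  have hpt : ∀ p ∈ R, (u p) ^ 2 ≤ (M + l) * F p.1 := by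
    rintro ⟨x₁, x₂⟩ hp
    obtain ⟨hx1, hx2⟩ := hp
    simp only [Set.mem_Ioo] at hx1 hx2
    have hxIcc : x₁ ∈ Set.Icc (0:ℝ) a := ⟨hx1.1.le, hx1.2.le⟩
    have hle : -l ≤ x₂ := hx2.1.le
    have heq := aux_ftc hu x₁ (-l) x₂ (hu0 x₁ hxIcc) hle
    have hcs := aux_cs hle (hg1 x₁)
    have hsub : (∫ t in Set.Ioc (-l) x₂, (fderiv ℝ u (x₁, t) (0, 1)) ^ 2) ≤ F x₁ := by
      have eF : F x₁ = ∫ t in Set.Ioc (-l) (γ' x₁), h (x₁, t) :=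
        (integral_Ioc_eq_integral_Ioo).symm
      rw [eF]
      have cint : IntegrableOn (fun t => h (x₁, t)) (Set.Ioc (-l) (γ' x₁)) :=
        aux_box1 (hhcont.comp (continuous_const.prodMk continuous_id)) Set.Ioc_subset_Icc_self
      exact setIntegral_mono_set cint
        (Filter.Eventually.of_forall fun t => hhnn _)
        (HasSubset.Subset.eventuallyLE (Set.Ioc_subset_Ioc_right hx2.2.le))
    calc (u (x₁, x₂)) ^ 2
        = (∫ t in Set.Ioc (-l) x₂, fderiv ℝ u (x₁, t) (0, 1)) ^ 2 := by rw [heq]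
      _ ≤ (x₂ - (-l)) * ∫ t in Set.Ioc (-l) x₂, (fderiv ℝ u (x₁, t) (0, 1)) ^ 2 := hcs
      _ ≤ (M + l) * F x₁ := by
          refine mul_le_mul (by linarith [hγ'leM x₁, hx2.2]) hsub
            (setIntegral_nonneg measurableSet_Ioc fun t _ => sq_nonneg _) hMl
  -- integrability on R
  have huib : IntegrableOn (fun p => (u p) ^ 2) R := aux_box (hu.continuous.pow 2) hRbox
  have hFib : IntegrableOn (fun p : ℝ × ℝ => (M + l) * F p.1) R :=
    aux_box (continuous_const.mul (hFcont.comp continuous_fst)) hRbox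
  -- step 1 : the union is a.e. equal to R
  have haeq : (Ω₀ ∪ D₀ : Set (ℝ × ℝ)) =ᵐ[volume] R := by
    rw [MeasureTheory.ae_eq_set]
    constructor
    · have hsub : Ω₀ ∪ D₀ ⊆ R := by
        rintro ⟨x, y⟩ hp
        rcases hp with hp | hp
        · rw [hΩ₀] at hp
          obtain ⟨h1, h2, h3, h4⟩ := hp
          refine ⟨⟨h1, h2⟩, ⟨by linarith, ?_⟩⟩
          rw [hγ'eq x ⟨h1.le, h2.le⟩]; exact h4
        · rw [hD₀] at hp
          obtain ⟨h1, h2⟩ := hp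
          exact ⟨h1, ⟨h2.1, h2.2.trans (hγ'pos x)⟩⟩
      rw [Set.diff_eq_empty.2 hsub, measure_empty]
    · refine measure_mono_null (fun p hp => ?_) (?_ : volume ((Set.univ : Set ℝ) ×ˢ {(0:ℝ)}) = 0)
      · obtain ⟨⟨hx, hy⟩, hnot⟩ := hp
        have hy2 : p.2 = 0 := by
          by_contra hne
          rcases lt_or_gt_of_ne hne with hlt | hgt
          · exact hnot (Or.inr (by rw [hD₀]; exact ⟨hx, ⟨hy.1, hlt⟩⟩))
          · refine hnot (Or.inl ?_)
            rw [hΩ₀]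
            refine ⟨hx.1, hx.2, hgt, ?_⟩
            rw [← hγ'eq p.1 ⟨hx.1.le, hx.2.le⟩]; exact hy.2
        exact ⟨Set.mem_univ _, hy2⟩
      · rw [Measure.volume_eq_prod, Measure.prod_prod, Real.volume_singleton, mul_zero]
  -- Fubini for R
  have hstep4 : (∫ p in R, F p.1) = ∫ x in Set.Ioo 0 a, (γ' x + l) * F x := by
    have hfub := aux_fubini 0 a (-l) M hγ'cont hγ'leM
      (show Continuous (fun p : ℝ × ℝ => F p.1) from hFcont.comp continuous_fst)
    rw [← hRdef] at hfub
    rw [hfub]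
    refine setIntegral_congr_fun measurableSet_Ioo fun x _ => ?_
    show (∫ _t in Set.Ioo (-l) (γ' x), F x) = (γ' x + l) * F x
    rw [setIntegral_const, measureReal_def, Real.volume_Ioo, smul_eq_mul,
      ENNReal.toReal_ofReal (by linarith [hγ'pos x] : (0:ℝ) ≤ γ' x - -l)]
    ring
  have hstep5 : (∫ x in Set.Ioo 0 a, (γ' x + l) * F x) ≤ ∫ x in Set.Ioo 0 a, (M + l) * F x :=
    setIntegral_mono_on
      (aux_box1 ((hγ'cont.add continuous_const).mul hFcont) Set.Ioo_subset_Icc_self)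
      (aux_box1 (continuous_const.mul hFcont) Set.Ioo_subset_Icc_self)
      measurableSet_Ioo
      (fun x _ => mul_le_mul_of_nonneg_right (by linarith [hγ'leM x]) (hFnn x))
  have hstep7 : (∫ x in Set.Ioo 0 a, F x)
      = (∫ x in Set.Ioo 0 a, F₁ x) + ∫ x in Set.Ioo 0 a, F₂ x := by
    rw [setIntegral_congr_fun measurableSet_Ioo fun x _ => hsplit x]
    exact integral_add (aux_box1 hF₁cont Set.Ioo_subset_Icc_self)
      (aux_box1 hF₂cont Set.Ioo_subset_Icc_self)
  have hstep8 : (∫ x in Set.Ioo 0 a, F₁ x) = ∫ p in D₀, h p := by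
    have hfub := aux_fubini 0 a (-l) 0
      (continuous_const : Continuous fun _ : ℝ => (0:ℝ)) (fun _ => le_refl (0:ℝ)) hhcont
    have hset : {p : ℝ × ℝ | p.1 ∈ Set.Ioo 0 a ∧ p.2 ∈ Set.Ioo (-l) ((fun _ => (0:ℝ)) p.1)}
        = D₀ := by
      rw [hD₀]; ext p; simp [Set.mem_prod]
    rw [hset] at hfub
    rw [← hfub]
  have hstep9 : (∫ x in Set.Ioo 0 a, F₂ x) = ∫ p in Ω₀, h p := by
    have hfub := aux_fubini 0 a 0 M hγ'cont hγ'leM hhcont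
    have hset : {p : ℝ × ℝ | p.1 ∈ Set.Ioo 0 a ∧ p.2 ∈ Set.Ioo 0 (γ' p.1)} = Ω₀ := by
      rw [hΩ₀]; ext ⟨x, y⟩
      simp only [Set.mem_setOf_eq, Set.mem_Ioo]
      constructor
      · rintro ⟨⟨h1, h2⟩, h3, h4⟩
        exact ⟨h1, h2, h3, by rwa [hγ'eq x ⟨h1.le, h2.le⟩] at h4⟩
      · rintro ⟨h1, h2, h3, h4⟩
        exact ⟨⟨h1, h2⟩, h3, by rwa [hγ'eq x ⟨h1.le, h2.le⟩]⟩
    rw [hset] at hfub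
    rw [← hfub]
  have hΩm : MeasurableSet Ω₀ := by
    have hset : {p : ℝ × ℝ | p.1 ∈ Set.Ioo 0 a ∧ p.2 ∈ Set.Ioo 0 (γ' p.1)} = Ω₀ := by
      rw [hΩ₀]; ext ⟨x, y⟩
      simp only [Set.mem_setOf_eq, Set.mem_Ioo]
      constructor
      · rintro ⟨⟨h1, h2⟩, h3, h4⟩
        exact ⟨h1, h2, h3, by rwa [hγ'eq x ⟨h1.le, h2.le⟩] at h4⟩
      · rintro ⟨h1, h2, h3, h4⟩
        exact ⟨⟨h1, h2⟩, h3, by rwa [hγ'eq x ⟨h1.le, h2.le⟩]⟩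
    rw [← hset]
    exact (aux_open 0 a 0 hγ'cont).measurableSet
  have hΩbox : Ω₀ ⊆ Set.Icc ((0:ℝ), 0) (a, M) := by
    rw [hΩ₀]
    rintro ⟨x, y⟩ ⟨h1, h2, h3, h4⟩
    simp only [Set.mem_Icc, Prod.le_def]
    exact ⟨⟨h1.le, h3.le⟩, h2.le, h4.le.trans (hMle x ⟨h1.le, h2.le⟩)⟩
  have hstep10 : (∫ p in Ω₀, h p) ≤ ∫ p in Ω₀, ‖fderiv ℝ u p‖ ^ 2 := by
    refine setIntegral_mono_on (aux_box hhcont hΩbox) (aux_box hnormcont hΩbox) hΩm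
      fun p _ => ?_
    have h1 : |fderiv ℝ u p (0, 1)| ≤ ‖fderiv ℝ u p‖ := by
      have := (fderiv ℝ u p).le_opNorm ((0:ℝ), (1:ℝ))
      have hv : ‖((0:ℝ), (1:ℝ))‖ = 1 := by
        simp [Prod.norm_def]
      rw [hv, mul_one] at this
      simpa using this
    calc h p = |fderiv ℝ u p (0, 1)| ^ 2 := by rw [hhdef]; simp [sq_abs]
      _ ≤ ‖fderiv ℝ u p‖ ^ 2 := pow_le_pow_left₀ (abs_nonneg _) h1 2
  have hDnn : 0 ≤ ∫ p in D₀, h p := setIntegral_nonneg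
    (by rw [hD₀]; exact measurableSet_Ioo.prod measurableSet_Ioo) fun p _ => hhnn p
  calc (∫ x in Ω₀ ∪ D₀, (u x) ^ 2)
      = ∫ x in R, (u x) ^ 2 := setIntegral_congr_set haeq
    _ ≤ ∫ p in R, (M + l) * F p.1 := setIntegral_mono_on huib hFib hRm hpt
    _ = (M + l) * ∫ p in R, F p.1 := integral_const_mul _ _
    _ = (M + l) * ∫ x in Set.Ioo 0 a, (γ' x + l) * F x := by rw [hstep4]
    _ ≤ (M + l) * ∫ x in Set.Ioo 0 a, (M + l) * F x :=
        mul_le_mul_of_nonneg_left hstep5 hMl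
    _ = (M + l) * ((M + l) * ∫ x in Set.Ioo 0 a, F x) := by rw [integral_const_mul]
    _ = (M + l) * ((M + l) * ((∫ p in D₀, h p) + ∫ p in Ω₀, h p)) := by
        rw [hstep7, hstep8, hstep9]
    _ ≤ (M + l) * ((M + l) * ((∫ p in Ω₀, ‖fderiv ℝ u p‖ ^ 2) + ∫ p in D₀, h p)) := by
        refine mul_le_mul_of_nonneg_left (mul_le_mul_of_nonneg_left ?_ hMl) hMl
        linarith [hstep10]
    _ = (M + l) ^ 2 * ((∫ p in Ω₀, ‖fderiv ℝ u p‖ ^ 2) + ∫ p in D₀, h p) := by ring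
end
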